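/- The geometric mechanism satisfies ε-differential privacy: if M is an integer-valued query with ℓ1-sensitivity Δ (i.e., |M(D) - M(D')| ≤ Δ for all neighboring D, D'), then for all neighboring datasets D, D' and all integers s, Pr(M(D) + δ = s) ≤ e^ε · Pr(M(D') + δ = s), where δ follows the double-geometric distribution with parameter ε/Δ. -/
import Mathlib

/-- The geometric mechanism satisfies ε-differential privacy. -/
theorem geometric_mechanism_dp {Dataset : Type*}
    (Neighbor : Dataset → Dataset → Prop) (M : Dataset → ℤ)
    (ε Δ : ℝ) (hε : 0 < ε) (hΔ : 0 < Δ)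
    (hsens : ∀ D D', Neighbor D D' → (|(M D - M D' : ℤ)| : ℝ) ≤ Δ) :
    ∀ D D', Neighbor D D' → ∀ s : ℤ,
      ((1 - Real.exp (-ε / Δ)) / (1 + Real.exp (-ε / Δ))) *
          Real.exp (-ε * |((s - M D : ℤ) : ℝ)| / Δ)
        ≤ Real.exp ε *
          (((1 - Real.exp (-ε / Δ)) / (1 + Real.exp (-ε / Δ))) *
            Real.exp (-ε * |((s - M D' : ℤ) : ℝ)| / Δ)) := by
  intro D D' hN s
  have hc : 0 ≤ (1 - Real.exp (-ε / Δ)) / (1 + Real.exp (-ε / Δ)) := by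
    apply div_nonneg
    · have : Real.exp (-ε / Δ) ≤ 1 := by
        rw [Real.exp_le_one_iff, neg_div]
        have := div_pos hε hΔ
        linarith
      linarith
    · positivity
  have hkey : (|((s - M D' : ℤ) : ℝ)|) - |((s - M D : ℤ) : ℝ)| ≤ Δ := by
    have h1 : (|((s - M D' : ℤ) : ℝ)|) - |((s - M D : ℤ) : ℝ)| ≤
        |((s - M D' : ℤ) : ℝ) - ((s - M D : ℤ) : ℝ)| := abs_sub_abs_le_abs_sub _ _
    have h2 : |((s - M D' : ℤ) : ℝ) - ((s - M D : ℤ) : ℝ)| = (|(M D - M D' : ℤ)| : ℝ) := by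
      push_cast
      congr 1
      ring
    rw [h2] at h1
    exact h1.trans (hsens D D' hN)
  have hexp : Real.exp (-ε * |((s - M D : ℤ) : ℝ)| / Δ) ≤
      Real.exp ε * Real.exp (-ε * |((s - M D' : ℤ) : ℝ)| / Δ) := by
    rw [← Real.exp_add, Real.exp_le_exp]
    have h3 : ε * (|((s - M D' : ℤ) : ℝ)| - |((s - M D : ℤ) : ℝ)|) / Δ ≤ ε := by
      rw [div_le_iff₀ hΔ]
      nlinarith
    have heq : -ε * |((s - M D : ℤ) : ℝ)| / Δ - (ε + -ε * |((s - M D' : ℤ) : ℝ)| / Δ)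
        = ε * (|((s - M D' : ℤ) : ℝ)| - |((s - M D : ℤ) : ℝ)|) / Δ - ε := by ring
    linarith
  calc ((1 - Real.exp (-ε / Δ)) / (1 + Real.exp (-ε / Δ))) *
          Real.exp (-ε * |((s - M D : ℤ) : ℝ)| / Δ)
      ≤ ((1 - Real.exp (-ε / Δ)) / (1 + Real.exp (-ε / Δ))) *
          (Real.exp ε * Real.exp (-ε * |((s - M D' : ℤ) : ℝ)| / Δ)) :=
        mul_le_mul_of_nonneg_left hexp hc
    _ = _ := by ring
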